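/- Let G be a finite group, S ⊆ G, and σ an automorphism of G. Define 𝒩_Σ(A) = {σ(a⁻¹s) : a ∈ A, s ∈ S} for A ⊆ G, and let 𝒩_Σ^m denote its m-fold iterate. Then for every m ≥ 1 and every A ⊆ G, 𝒩_Σ^m(A) = σ²(S⁻¹)·σ⁴(S⁻¹)···σ^{2⌊m/2⌋}(S⁻¹) · σ^m(A^{(−1)^m}) · σ^{2⌈m/2⌉−1}(S)···σ³(S)·σ(S), where for subsets X, Y of G the product XY is {xy : x ∈ X, y ∈ Y}, X⁻¹ = {x⁻¹ : x ∈ X}, A^{(−1)^m} is A if m is even and A⁻¹ if m is odd, and the left factor is empty (the identity) when ⌊m/2⌋ = 0. -/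
import Mathlib


open scoped Pointwise


section
variable {G : Type*} [Group G] (σ : G ≃* G)

lemma aux_step (n : ℕ) (X : Set G) :
    (⇑σ)^[n + 1] '' X = ⇑σ '' ((⇑σ)^[n] '' X) := by
  rw [Function.iterate_succ']; exact Set.image_comp _ _ _

lemma aux_inv1 (X : Set G) : ⇑σ '' X⁻¹ = (⇑σ '' X)⁻¹ := by
  ext x
  simp only [Set.mem_inv, Set.mem_image]
  constructor
  · rintro ⟨y, hy, rfl⟩
    exact ⟨y⁻¹, hy, by simp⟩
  · rintro ⟨y, hy, hxy⟩
    exact ⟨y⁻¹, by simpa using hy, by rw [map_inv, hxy, inv_inv]⟩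

lemma aux_it_mul (n : ℕ) (X Y : Set G) :
    (⇑σ)^[n] '' (X * Y) = (⇑σ)^[n] '' X * (⇑σ)^[n] '' Y := by
  induction n with
  | zero => simp
  | succ n ih => rw [aux_step, aux_step, aux_step, ih, Set.image_mul σ]

lemma aux_it_inv (n : ℕ) (X : Set G) :
    (⇑σ)^[n] '' X⁻¹ = ((⇑σ)^[n] '' X)⁻¹ := by
  induction n with
  | zero => simp
  | succ n ih => rw [aux_step, aux_step, ih, aux_inv1]

end

section
variable {G : Type*} [Group G] (σ : G ≃* G)

lemma aux_step' (n : ℕ) (X : Set G) :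
    (⇑σ)^[n + 1] '' X = (⇑σ)^[n] '' (⇑σ '' X) := by
  rw [Function.iterate_succ]; exact Set.image_comp _ _ _

lemma aux_cons {H : Type*} [Monoid H] (g : ℕ → H) (n : ℕ) :
    g 0 * ((List.range n).map (fun i => g (i + 1))).prod
      = ((List.range (n + 1)).map g).prod := by
  rw [List.range_succ_eq_map, List.map_cons, List.prod_cons, List.map_map]
  rfl

lemma aux_snoc {H : Type*} [Monoid H] (g : ℕ → H) (n : ℕ) :
    ((List.range n).map g).prod * g n = ((List.range (n + 1)).map g).prod := by
  rw [List.range_succ, List.map_append, List.prod_append]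
  simp

end

/-- Let `G` be a finite group, `S ⊆ G`, and `σ` an automorphism of `G`. With
`𝒩_Σ(A) = {σ(a⁻¹s) : a ∈ A, s ∈ S}` the out-neighbourhood operation of the twisted Cayley sum
graph and `𝒩_Σ^m` its `m`-fold iterate, for every `m ≥ 1` and every `A ⊆ G`,
`𝒩_Σ^m(A) = σ²(S⁻¹)·σ⁴(S⁻¹)···σ^(2⌊m/2⌋)(S⁻¹) · σ^m(A^((-1)^m)) ·
σ^(2⌈m/2⌉-1)(S)···σ³(S)·σ(S)`, where products of sets are pointwise products (the left factor
being the identity `{1}` of the set monoid when `⌊m/2⌋ = 0`), `X⁻¹ = {x⁻¹ : x ∈ X}` and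
`A^((-1)^m)` is `A` if `m` is even and `A⁻¹` if `m` is odd. -/
theorem stmt_17 {G : Type*} [Group G] [Fintype G]
    (S : Set G) (σ : G ≃* G)
    (NSig : Set G → Set G)
    (hNSig : ∀ A : Set G, NSig A = {y : G | ∃ a ∈ A, ∃ s ∈ S, y = σ (a⁻¹ * s)})
    (m : ℕ) (hm : 1 ≤ m) (A : Set G) :
    NSig^[m] A =
      ((List.range (m / 2)).map (fun i => (⇑σ)^[2 * (i + 1)] '' S⁻¹)).prod *
      ((⇑σ)^[m] '' (if Even m then A else A⁻¹)) *
      ((List.range ((m + 1) / 2)).map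
        (fun i => (⇑σ)^[2 * ((m + 1) / 2) - 1 - 2 * i] '' S)).prod := by
  have hN : ∀ X : Set G, NSig X = ⇑σ '' X⁻¹ * ⇑σ '' S := by
    intro X
    rw [hNSig]
    ext y
    simp only [Set.mem_setOf_eq, Set.mem_mul, Set.mem_image, Set.mem_inv]
    constructor
    · rintro ⟨a, ha, s, hs, rfl⟩
      exact ⟨σ a⁻¹, ⟨a⁻¹, by simpa using ha, rfl⟩, σ s, ⟨s, hs, rfl⟩,
        (map_mul σ _ _).symm⟩
    · rintro ⟨u, ⟨b, hb, rfl⟩, v, ⟨s, hs, rfl⟩, rfl⟩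
      exact ⟨b⁻¹, hb, s, hs, by rw [← map_mul]; simp⟩
  induction m, hm using Nat.le_induction generalizing A with
  | base =>
      rw [Function.iterate_one, hN, if_neg (by decide : ¬ Even 1)]
      simp [List.range_succ, Function.iterate_one]
  | succ m hm ih =>
      rw [Function.iterate_succ_apply, ih (NSig A), hN A]
      rcases Nat.even_or_odd m with he | ho
      · obtain ⟨k, rfl⟩ := he
        have h1 : ¬ Even (k + k + 1) := by simp [Nat.even_add_one, parity_simps]
        rw [if_pos (Even.add_self k), if_neg h1]
        rw [aux_it_mul, ← aux_step', ← aux_step']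
        have e1 : (k + k) / 2 = k := by omega
        have e2 : (k + k + 1) / 2 = k := by omega
        have e3 : (k + k + 1 + 1) / 2 = k + 1 := by omega
        rw [e1, e2, e3]
        rw [← aux_cons (fun i => (⇑σ)^[2 * (k + 1) - 1 - 2 * i] '' S) k]
        have hh : 2 * (k + 1) - 1 - 2 * 0 = k + k + 1 := by omega
        rw [hh]
        have hmap : (List.range k).map
              (fun i => (⇑σ)^[2 * (k + 1) - 1 - 2 * (i + 1)] '' S)
            = (List.range k).map (fun i => (⇑σ)^[2 * k - 1 - 2 * i] '' S) := by
          apply List.map_congr_left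
          intro i hi
          have : 2 * (k + 1) - 1 - 2 * (i + 1) = 2 * k - 1 - 2 * i := by omega
          rw [this]
        rw [hmap, mul_assoc, mul_assoc, mul_assoc]
      · obtain ⟨k, rfl⟩ := ho
        have h1 : Even (2 * k + 1 + 1) := by
          refine ⟨k + 1, by ring⟩
        have h0 : ¬ Even (2 * k + 1) := by simp [parity_simps]
        rw [if_neg h0, if_pos h1]
        rw [mul_inv_rev, aux_inv1, inv_inv, ← aux_inv1, aux_it_mul,
          ← aux_step', ← aux_step', aux_it_inv]
        have e1 : (2 * k + 1) / 2 = k := by omega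
        have e2 : (2 * k + 1 + 1) / 2 = k + 1 := by omega
        have e3 : (2 * k + 1 + 1 + 1) / 2 = k + 1 := by omega
        rw [e1, e2, e3]
        rw [← aux_snoc (fun i => (⇑σ)^[2 * (i + 1)] '' S⁻¹) k]
        have hh : 2 * (k + 1) = 2 * k + 1 + 1 := by omega
        rw [hh]
        rw [aux_it_inv, ← mul_assoc]
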